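/- In R = K[x,y,z], let I = (xy, yz, zx) = (x,y) ∩ (x,z) ∩ (y,z). Then for all n ∈ ℕ, the symbolic power I^{(n)} equals the rational power (I^{(2)})^{n/2}, where I^{(2)} = (x^2y^2, xyz, x^2z^2, y^2z^2). -/

import Mathlib

open MvPolynomial Polynomial Finset

/-- `x` satisfies an equation of integral dependence over the ideal `I`. -/
def IsIntegralOverIdeal {A : Type*} [CommRing A] (I : Ideal A) (x : A) : Prop :=
  ∃ n : ℕ, 0 < n ∧ ∃ c : ℕ → A, (∀ i ∈ Finset.Icc 1 n, c i ∈ I ^ i) ∧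
    x ^ n + ∑ i ∈ Finset.Icc 1 n, c i * x ^ (n - i) = 0

/-- The integral closure of an ideal, as a set. -/
def intCl {A : Type*} [CommRing A] (I : Ideal A) : Set A :=
  {x | IsIntegralOverIdeal I x}

/-- The rational power `I^{a/b}` of an ideal, as a set. -/
def ratPow {A : Type*} [CommRing A] (I : Ideal A) (a b : ℕ) : Set A :=
  {x | x ^ b ∈ intCl (I ^ a)}

/-- The rational power `I^q` for a rational exponent `q` (in lowest terms). -/
def ratPowQ {A : Type*} [CommRing A] (I : Ideal A) (q : ℚ) : Set A :=
  ratPow I q.num.toNat q.den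

namespace SymbAux
variable {K : Type*} [Field K]

noncomputable def Phi (w : Fin 3 → ℕ) :
    MvPolynomial (Fin 3) K →+* Polynomial (MvPolynomial (Fin 3) K) :=
  MvPolynomial.eval₂Hom (Polynomial.C.comp MvPolynomial.C)
    (fun k => Polynomial.C (X k) * Polynomial.X ^ w k)

def wdeg (w : Fin 3 → ℕ) (d : Fin 3 →₀ ℕ) : ℕ := ∑ k, w k * d k

lemma Phi_monomial (w : Fin 3 → ℕ) (d : Fin 3 →₀ ℕ) (a : K) :
    Phi w (monomial d a) =
      Polynomial.C (monomial d a) * Polynomial.X ^ wdeg w d := by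
  have h1 : Phi w (monomial d a)
      = Polynomial.C (MvPolynomial.C a) *
        d.prod fun k e => (Polynomial.C (X k) * Polynomial.X ^ w k) ^ e := by
    simp [Phi, eval₂Hom, MvPolynomial.eval₂_monomial]
  rw [h1, Finsupp.prod_fintype _ _ (fun i => pow_zero _)]
  have h2 : ∀ k : Fin 3, (Polynomial.C (X k : MvPolynomial (Fin 3) K) *
      Polynomial.X ^ w k) ^ d k
      = Polynomial.C ((X k : MvPolynomial (Fin 3) K) ^ d k) * Polynomial.X ^ (w k * d k) := by
    intro k
    rw [mul_pow, ← pow_mul, map_pow]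
  simp only [h2]
  rw [Finset.prod_mul_distrib, Finset.prod_pow_eq_pow_sum, ← map_prod]
  have h3 : (monomial d a : MvPolynomial (Fin 3) K)
      = MvPolynomial.C a * ∏ k, (X k : MvPolynomial (Fin 3) K) ^ d k := by
    rw [monomial_eq, Finsupp.prod_fintype _ _ (fun i => pow_zero _)]
  rw [h3, wdeg, map_mul]
  ring

lemma Phi_apply (w : Fin 3 → ℕ) (f : MvPolynomial (Fin 3) K) :
    Phi w f = ∑ d ∈ f.support,
      Polynomial.C (monomial d (coeff d f)) * Polynomial.X ^ wdeg w d := by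
  conv_lhs => rw [f.as_sum, map_sum]
  exact Finset.sum_congr rfl fun d _ => Phi_monomial w d _

lemma dvd_Phi_iff (w : Fin 3 → ℕ) (n : ℕ) (f : MvPolynomial (Fin 3) K) :
    (Polynomial.X ^ n ∣ Phi w f) ↔ ∀ d ∈ f.support, n ≤ wdeg w d := by
  constructor
  · intro ⟨q, hq⟩ d hd
    by_contra hlt
    push_neg at hlt
    set m := wdeg w d with hm
    have hcoeff : (Phi w f).coeff m = ∑ e ∈ f.support,
        if wdeg w e = m then (monomial e (coeff e f) : MvPolynomial (Fin 3) K) else 0 := by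
      rw [Phi_apply, Polynomial.finset_sum_coeff]
      refine Finset.sum_congr rfl fun e _ => ?_
      rw [Polynomial.coeff_C_mul, Polynomial.coeff_X_pow]
      by_cases h : wdeg w e = m
      · simp [h]
      · simp [h, Ne.symm h]
    have hzero : (Phi w f).coeff m = 0 := by
      rw [hq, mul_comm, Polynomial.coeff_mul_X_pow']
      simp [Nat.not_le.mpr hlt]
    rw [hcoeff] at hzero
    have := congrArg (MvPolynomial.coeff d) hzero
    rw [MvPolynomial.coeff_sum] at this
    rw [Finset.sum_eq_single d] at this
    · simp [hm] at this
      exact (MvPolynomial.mem_support_iff.mp hd) this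
    · intro e he hne
      by_cases h : wdeg w e = m
      · simp [h, MvPolynomial.coeff_monomial, hne]
      · simp [h]
    · intro h; exact absurd hd h
  · intro h
    rw [Phi_apply]
    refine Finset.dvd_sum fun d hd => ?_
    exact Dvd.dvd.mul_left (pow_dvd_pow _ (h d hd)) _


def Vid (w : Fin 3 → ℕ) (n : ℕ) : Ideal (MvPolynomial (Fin 3) K) where
  carrier := {f | Polynomial.X ^ n ∣ Phi w f}
  zero_mem' := by simp
  add_mem' := by intro a b ha hb; simpa using dvd_add ha hb
  smul_mem' := by
    intro c f hf
    simp only [Set.mem_setOf_eq, smul_eq_mul, map_mul]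
    exact Dvd.dvd.mul_left hf _

lemma mem_Vid {w : Fin 3 → ℕ} {n : ℕ} {f : MvPolynomial (Fin 3) K} :
    f ∈ Vid w n ↔ Polynomial.X ^ n ∣ Phi w f := Iff.rfl

lemma pow_le_Vid {w : Fin 3 → ℕ} {I : Ideal (MvPolynomial (Fin 3) K)} {m : ℕ}
    (h : I ≤ Vid w m) : ∀ k, I ^ k ≤ Vid w (m * k) := by
  intro k
  induction k with
  | zero =>
    intro f _
    show Polynomial.X ^ (m * 0) ∣ Phi w f
    simpa using one_dvd _
  | succ k ih =>
    rw [pow_succ, Nat.mul_succ]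
    refine Ideal.mul_le.mpr fun r hr s hs => ?_
    rw [mem_Vid, map_mul, pow_add]
    exact mul_dvd_mul (ih hr) (h hs)

lemma exists_ord {T : Type*} [CommRing T] [IsDomain T] (p : Polynomial T) (hp : p ≠ 0) :
    ∃ s h, p = Polynomial.X ^ s * h ∧ ¬ (Polynomial.X ∣ h) := by
  classical
  have hbound : ¬ Polynomial.X ^ (p.natDegree + 1) ∣ p := by
    intro hdvd
    have := Polynomial.natDegree_le_of_dvd hdvd hp
    rw [Polynomial.natDegree_X_pow] at this
    omega
  let P : ℕ → Prop := fun k => ¬ Polynomial.X ^ k ∣ p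
  have hP : ∃ k, P k := ⟨_, hbound⟩
  let k0 := Nat.find hP
  have hk0 : ¬ Polynomial.X ^ k0 ∣ p := Nat.find_spec hP
  have hk0pos : 0 < k0 := by
    rcases Nat.eq_zero_or_pos k0 with h | h
    · exfalso; apply hk0; rw [h, pow_zero]; exact one_dvd _
    · exact h
  have hdvd : Polynomial.X ^ (k0 - 1) ∣ p := by
    have := Nat.find_min hP (m := k0 - 1) (by omega)
    simpa [P] using this
  obtain ⟨h, hph⟩ := hdvd
  refine ⟨k0 - 1, h, hph, fun hXh => ?_⟩
  apply hk0
  obtain ⟨h', hh'⟩ := hXh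
  have hk : k0 = (k0 - 1) + 1 := by omega
  rw [hk, pow_succ, hph, hh']
  exact ⟨h', by ring⟩

lemma ord_dvd_iff {T : Type*} [CommRing T] [IsDomain T] {s a : ℕ} {h : Polynomial T}
    (hh : ¬ (Polynomial.X ∣ h)) :
    (Polynomial.X ^ a ∣ Polynomial.X ^ s * h) ↔ a ≤ s := by
  constructor
  · intro hdvd
    by_contra hlt
    push_neg at hlt
    have h1 : Polynomial.X ^ (s + 1) ∣ Polynomial.X ^ s * h :=
      dvd_trans (pow_dvd_pow _ (by omega)) hdvd
    rw [pow_succ] at h1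
    apply hh
    have hXs : (Polynomial.X : Polynomial T) ^ s ≠ 0 := pow_ne_zero _ Polynomial.X_ne_zero
    exact (mul_dvd_mul_iff_left hXs).mp h1
  · intro hle
    exact Dvd.dvd.mul_right (pow_dvd_pow _ hle) _

lemma Phi_ne_zero {w : Fin 3 → ℕ} {f : MvPolynomial (Fin 3) K} (hf : f ≠ 0) :
    Phi w f ≠ 0 := by
  intro h0
  apply hf
  have hcomp : (Polynomial.evalRingHom (1 : MvPolynomial (Fin 3) K)).comp (Phi w)
      = RingHom.id _ := by
    apply MvPolynomial.ringHom_ext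
    · intro r; simp [Phi]
    · intro i; simp [Phi]
  have : (Polynomial.evalRingHom (1 : MvPolynomial (Fin 3) K)) (Phi w f) = f := by
    rw [← RingHom.comp_apply, hcomp]; rfl
  rw [h0, map_zero] at this
  exact this.symm

/-- the key valuative lemma: an element integral over an ideal contained in
`Vid w (m*i)` filtration has `X^m ∣ Phi`. -/
lemma int_lemma (w : Fin 3 → ℕ) (m : ℕ) (g : MvPolynomial (Fin 3) K) (N : ℕ)
    (hN : 0 < N) (c : ℕ → MvPolynomial (Fin 3) K)
    (hc : ∀ i ∈ Finset.Icc 1 N, Polynomial.X ^ (m * i) ∣ Phi w (c i))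
    (heq : g ^ N + ∑ i ∈ Finset.Icc 1 N, c i * g ^ (N - i) = 0) :
    Polynomial.X ^ m ∣ Phi w g := by
  rcases eq_or_ne g 0 with rfl | hg
  · simp
  obtain ⟨s, h, hph, hh⟩ := exists_ord (Phi w g) (Phi_ne_zero hg)
  rcases le_or_gt m s with hle | hlt
  · rw [hph]; exact (ord_dvd_iff hh).mpr hle
  -- s < m : contradiction
  exfalso
  have hgN : Phi w g ^ N = - ∑ i ∈ Finset.Icc 1 N, Phi w (c i) * Phi w g ^ (N - i) := by
    have := congrArg (Phi w) heq
    simp only [map_add, map_pow, map_sum, map_mul, map_zero] at this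
    exact eq_neg_of_add_eq_zero_left this
  have hdvdsum : Polynomial.X ^ (N * s + 1) ∣
      ∑ i ∈ Finset.Icc 1 N, Phi w (c i) * Phi w g ^ (N - i) := by
    refine Finset.dvd_sum fun i hi => ?_
    obtain ⟨hi1, hi2⟩ := Finset.mem_Icc.mp hi
    have hterm : Polynomial.X ^ (m * i + s * (N - i)) ∣
        Phi w (c i) * Phi w g ^ (N - i) := by
      rw [pow_add]
      refine mul_dvd_mul (hc i hi) ?_
      rw [hph, mul_pow, ← pow_mul]
      exact Dvd.dvd.mul_right dvd_rfl _
    refine dvd_trans (pow_dvd_pow _ ?_) hterm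
    have f1 : s * (N - i) + s * i = s * N := by
      rw [← Nat.mul_add]; congr 1; omega
    have f2 : s * i + i ≤ m * i := by
      have := Nat.mul_le_mul_right i (show s + 1 ≤ m by omega)
      rw [add_mul, one_mul] at this
      exact this
    have f0 : N * s = s * N := Nat.mul_comm _ _
    linarith
  replace hdvdsum : Polynomial.X ^ (N * s + 1) ∣ Phi w g ^ N := by
    rw [hgN]; exact hdvdsum.neg_right
  have hfac : Phi w g ^ N = Polynomial.X ^ (s * N) * h ^ N := by
    rw [hph, mul_pow, ← pow_mul]
  rw [hfac] at hdvdsum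
  have hhN : ¬ (Polynomial.X ∣ h ^ N) := fun hd => hh (Polynomial.prime_X.dvd_of_dvd_pow hd)
  have := (ord_dvd_iff hhN).mp hdvdsum
  have f0 : N * s = s * N := Nat.mul_comm _ _
  omega

lemma pow_dvd_of_sq {w : Fin 3 → ℕ} {f : MvPolynomial (Fin 3) K} {n : ℕ}
    (hd : Polynomial.X ^ (2 * n) ∣ (Phi w f) ^ 2) : Polynomial.X ^ n ∣ Phi w f := by
  rcases eq_or_ne f 0 with rfl | hf
  · simp
  obtain ⟨s, h, hph, hh⟩ := exists_ord (Phi w f) (Phi_ne_zero hf)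
  have hfac : (Phi w f) ^ 2 = Polynomial.X ^ (s * 2) * h ^ 2 := by
    rw [hph, mul_pow, ← pow_mul]
  rw [hfac] at hd
  have hh2 : ¬ (Polynomial.X ∣ h ^ 2) := fun hdd => hh (Polynomial.prime_X.dvd_of_dvd_pow hdd)
  have := (ord_dvd_iff hh2).mp hd
  rw [hph]
  exact (ord_dvd_iff hh).mpr (by omega)

def pairw (i j : Fin 3) : Fin 3 → ℕ := fun k => if k = i ∨ k = j then 1 else 0

lemma wdeg_pairw {i j : Fin 3} (hij : i ≠ j) (d : Fin 3 →₀ ℕ) :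
    wdeg (pairw i j) d = d i + d j := by
  unfold wdeg pairw
  have : ∀ k : Fin 3, (if k = i ∨ k = j then 1 else 0) * d k
      = (if k = i then d k else 0) + (if k = j then d k else 0) := by
    intro k
    by_cases h1 : k = i <;> by_cases h2 : k = j
    · exact absurd (h1 ▸ h2) hij
    · simp only [h1, h2]
      simp only [true_or, if_true, if_false, one_mul]
      have : ¬ (i = j) := hij
      simp [this]
    · simp only [h1, h2]
      simp only [or_true, if_true, if_false, one_mul]
      have : ¬ (j = i) := Ne.symm hij
      simp [this]
    · simp [h1, h2]
  simp only [this, Finset.sum_add_distrib]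
  rw [Finset.sum_ite_eq' Finset.univ i d, Finset.sum_ite_eq' Finset.univ j d]
  simp

lemma span_pair_le_Vid (i j : Fin 3) :
    Ideal.span {X i, X j} ≤ (Vid (pairw i j) 1 : Ideal (MvPolynomial (Fin 3) K)) := by
  rw [Ideal.span_le]
  rintro f (rfl | rfl) <;>
  · rw [SetLike.mem_coe, mem_Vid]
    simp [Phi, pairw]

lemma span_pair_pow_le_Vid (i j : Fin 3) (n : ℕ) :
    Ideal.span {X i, X j} ^ n ≤ (Vid (pairw i j) n : Ideal (MvPolynomial (Fin 3) K)) := by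
  have h := pow_le_Vid (span_pair_le_Vid (K := K) i j) n
  rwa [one_mul] at h

/-- helper: factor a monomial -/
lemma monomial_factor {d e : Fin 3 →₀ ℕ} (hle : ∀ k, e k ≤ d k) (c : K) :
    monomial d c = monomial (d - e) c * monomial e 1 := by
  rw [monomial_mul, mul_one]
  have h : d - e + e = d := by
    ext k
    simp only [Finsupp.coe_add, Pi.add_apply, Finsupp.tsub_apply]
    have := hle k
    omega
  rw [h]

lemma monomial_mem_pair_pow {i j : Fin 3} (hij : i ≠ j) :
    ∀ (n : ℕ) (d : Fin 3 →₀ ℕ) (c : K), n ≤ d i + d j →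
      monomial d c ∈ Ideal.span {X i, X j} ^ n := by
  intro n
  induction n with
  | zero => intro d c _; simp
  | succ n ih =>
    intro d c hn
    have hcase : 1 ≤ d i ∨ 1 ≤ d j := by omega
    have key : ∀ u : Fin 3, (u = i ∨ u = j) → 1 ≤ d u →
        monomial d c ∈ Ideal.span {X i, X j} ^ (n + 1) := by
      intro u hu hdu
      set e : Fin 3 →₀ ℕ := Finsupp.single u 1 with he
      have hle : ∀ k, e k ≤ d k := by
        intro k
        rcases eq_or_ne u k with rfl | hk
        · simpa [he] using hdu
        · simp [he, Finsupp.single_apply, hk]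
      rw [monomial_factor hle c, pow_succ]
      refine Ideal.mul_mem_mul ?_ ?_
      · apply ih
        have hdi : (d - e) i + (d - e) j = d i + d j - 1 := by
          have hi' : (d - e) i = d i - e i := Finsupp.tsub_apply d e i
          have hj' : (d - e) j = d j - e j := Finsupp.tsub_apply d e j
          have hei : e i + e j = 1 := by
            rcases hu with rfl | rfl
            · simp [he, Finsupp.single_apply, hij]
            · simp [he, Finsupp.single_apply, Ne.symm hij]
          have heu : e u = 1 := by simp [he]
          have h1 : e i ≤ d i := hle i
          have h2 : e j ≤ d j := hle j
          rcases hu with rfl | rfl <;> omega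
        omega
      · have : (monomial (Finsupp.single u 1) 1 : MvPolynomial (Fin 3) K) = X u := by
          rw [← MvPolynomial.X_pow_eq_monomial, pow_one]
        rw [this]
        rcases hu with rfl | rfl
        · exact Ideal.subset_span (by simp)
        · exact Ideal.subset_span (by simp)
    rcases hcase with h | h
    · exact key i (Or.inl rfl) h
    · exact key j (Or.inr rfl) h

lemma mem_of_support_mem {P : Ideal (MvPolynomial (Fin 3) K)} {f : MvPolynomial (Fin 3) K}
    (h : ∀ d ∈ f.support, monomial d (coeff d f) ∈ P) : f ∈ P := by
  rw [f.as_sum]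
  exact Ideal.sum_mem _ h

lemma mem_span_pair_pow_iff {i j : Fin 3} (hij : i ≠ j) (n : ℕ)
    (f : MvPolynomial (Fin 3) K) :
    f ∈ Ideal.span {X i, X j} ^ n ↔ ∀ d ∈ f.support, n ≤ d i + d j := by
  constructor
  · intro hf
    have hdvd := span_pair_pow_le_Vid i j n hf
    rw [mem_Vid] at hdvd
    intro d hd
    have := (dvd_Phi_iff (pairw i j) n f).mp hdvd d hd
    rwa [wdeg_pairw hij] at this
  · intro h
    exact mem_of_support_mem fun d hd => monomial_mem_pair_pow hij n d _ (h d hd)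


noncomputable def e1 : Fin 3 →₀ ℕ := Finsupp.single 0 2 + Finsupp.single 1 2
noncomputable def e2 : Fin 3 →₀ ℕ :=
  Finsupp.single 0 1 + Finsupp.single 1 1 + Finsupp.single 2 1
noncomputable def e3 : Fin 3 →₀ ℕ := Finsupp.single 0 2 + Finsupp.single 2 2
noncomputable def e4 : Fin 3 →₀ ℕ := Finsupp.single 1 2 + Finsupp.single 2 2

lemma e1_apply : (e1 0, e1 1, e1 2) = (2, 2, 0) := by simp [e1, Finsupp.single_apply]
lemma e2_apply : (e2 0, e2 1, e2 2) = (1, 1, 1) := by simp [e2, Finsupp.single_apply]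
lemma e3_apply : (e3 0, e3 1, e3 2) = (2, 0, 2) := by simp [e3, Finsupp.single_apply]
lemma e4_apply : (e4 0, e4 1, e4 2) = (0, 2, 2) := by simp [e4, Finsupp.single_apply]

lemma Xmon (u : Fin 3) :
    (X u : MvPolynomial (Fin 3) K) = monomial (Finsupp.single u 1) 1 := by
  rw [← MvPolynomial.X_pow_eq_monomial, pow_one]

lemma g1 : (X 0 : MvPolynomial (Fin 3) K) ^ 2 * X 1 ^ 2 = monomial e1 1 := by
  rw [MvPolynomial.X_pow_eq_monomial, MvPolynomial.X_pow_eq_monomial, monomial_mul, mul_one]; rfl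
lemma g2 : (X 0 : MvPolynomial (Fin 3) K) * X 1 * X 2 = monomial e2 1 := by
  rw [Xmon, Xmon, Xmon, monomial_mul, monomial_mul, mul_one, mul_one]; rfl
lemma g3 : (X 0 : MvPolynomial (Fin 3) K) ^ 2 * X 2 ^ 2 = monomial e3 1 := by
  rw [MvPolynomial.X_pow_eq_monomial, MvPolynomial.X_pow_eq_monomial, monomial_mul, mul_one]; rfl
lemma g4 : (X 1 : MvPolynomial (Fin 3) K) ^ 2 * X 2 ^ 2 = monomial e4 1 := by
  rw [MvPolynomial.X_pow_eq_monomial, MvPolynomial.X_pow_eq_monomial, monomial_mul, mul_one]; rfl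

lemma le_of_three {a b : Fin 3 →₀ ℕ} (h0 : a 0 ≤ b 0) (h1 : a 1 ≤ b 1) (h2 : a 2 ≤ b 2) :
    ∀ k, a k ≤ b k := by
  intro k; fin_cases k <;> assumption

noncomputable def JId : Ideal (MvPolynomial (Fin 3) K) :=
  Ideal.span {X 0 ^ 2 * X 1 ^ 2, X 0 * X 1 * X 2, X 0 ^ 2 * X 2 ^ 2, X 1 ^ 2 * X 2 ^ 2}

lemma mono_e_mem_J (e : Fin 3 →₀ ℕ) (he : e = e1 ∨ e = e2 ∨ e = e3 ∨ e = e4) :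
    (monomial e 1 : MvPolynomial (Fin 3) K) ∈ JId := by
  rcases he with rfl | rfl | rfl | rfl
  · rw [← g1]; exact Ideal.subset_span (Set.mem_insert _ _)
  · rw [← g2]
    exact Ideal.subset_span (Set.mem_insert_of_mem _ (Set.mem_insert _ _))
  · rw [← g3]
    exact Ideal.subset_span
      (Set.mem_insert_of_mem _ (Set.mem_insert_of_mem _ (Set.mem_insert _ _)))
  · rw [← g4]
    exact Ideal.subset_span
      (Set.mem_insert_of_mem _ (Set.mem_insert_of_mem _
        (Set.mem_insert_of_mem _ rfl)))

lemma monomial_mem_J_pow :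
    ∀ (m : ℕ) (d : Fin 3 →₀ ℕ) (c : K),
      2 * m ≤ d 0 + d 1 → 2 * m ≤ d 0 + d 2 → 2 * m ≤ d 1 + d 2 →
      monomial d c ∈ (JId : Ideal (MvPolynomial (Fin 3) K)) ^ m := by
  intro m
  induction m with
  | zero => intro d c _ _ _; simp
  | succ m ih =>
    intro d c h01 h02 h12
    -- choose a generator exponent e with e ≤ d and good remaining degrees
    have key : ∀ e : Fin 3 →₀ ℕ, (e = e1 ∨ e = e2 ∨ e = e3 ∨ e = e4) →
        (∀ k, e k ≤ d k) →
        (2 * m ≤ (d 0 - e 0) + (d 1 - e 1)) →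
        (2 * m ≤ (d 0 - e 0) + (d 2 - e 2)) →
        (2 * m ≤ (d 1 - e 1) + (d 2 - e 2)) →
        monomial d c ∈ (JId : Ideal (MvPolynomial (Fin 3) K)) ^ (m + 1) := by
      intro e hgen hle k01 k02 k12
      rw [monomial_factor hle c, pow_succ]
      refine Ideal.mul_mem_mul (ih _ c ?_ ?_ ?_) (mono_e_mem_J e hgen)
      · have a0 : (d - e) 0 = d 0 - e 0 := Finsupp.tsub_apply d e 0
        have a1 : (d - e) 1 = d 1 - e 1 := Finsupp.tsub_apply d e 1
        omega
      · have a0 : (d - e) 0 = d 0 - e 0 := Finsupp.tsub_apply d e 0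
        have a2 : (d - e) 2 = d 2 - e 2 := Finsupp.tsub_apply d e 2
        omega
      · have a1 : (d - e) 1 = d 1 - e 1 := Finsupp.tsub_apply d e 1
        have a2 : (d - e) 2 = d 2 - e 2 := Finsupp.tsub_apply d e 2
        omega
    have he1 := e1_apply; have he2 := e2_apply
    have he3 := e3_apply; have he4 := e4_apply
    simp only [Prod.mk.injEq] at he1 he2 he3 he4
    obtain ⟨b10, b11, b12⟩ := he1
    obtain ⟨b20, b21, b22⟩ := he2
    obtain ⟨b30, b31, b32⟩ := he3
    obtain ⟨b40, b41, b42⟩ := he4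
    by_cases hall : 1 ≤ d 0 ∧ 1 ≤ d 1 ∧ 1 ≤ d 2
    · exact key e2 (by tauto) (le_of_three (by omega) (by omega) (by omega))
        (by omega) (by omega) (by omega)
    · push_neg at hall
      by_cases h0 : d 0 = 0
      · exact key e4 (by tauto) (le_of_three (by omega) (by omega) (by omega))
          (by omega) (by omega) (by omega)
      · by_cases h1 : d 1 = 0
        · exact key e3 (by tauto) (le_of_three (by omega) (by omega) (by omega))
            (by omega) (by omega) (by omega)
        · have h2 : d 2 = 0 := by omega
          exact key e1 (by tauto) (le_of_three (by omega) (by omega) (by omega))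
            (by omega) (by omega) (by omega)


lemma J_le_span2 {i j : Fin 3} (hij : i ≠ j)
    (h1 : 2 ≤ e1 i + e1 j) (h2 : 2 ≤ e2 i + e2 j)
    (h3 : 2 ≤ e3 i + e3 j) (h4 : 2 ≤ e4 i + e4 j) :
    (JId : Ideal (MvPolynomial (Fin 3) K)) ≤ Ideal.span {X i, X j} ^ 2 := by
  rw [JId, Ideal.span_le]
  rintro f (rfl | rfl | rfl | rfl)
  · rw [SetLike.mem_coe, g1]; exact monomial_mem_pair_pow hij 2 _ _ h1
  · rw [SetLike.mem_coe, g2]; exact monomial_mem_pair_pow hij 2 _ _ h2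
  · rw [SetLike.mem_coe, g3]; exact monomial_mem_pair_pow hij 2 _ _ h3
  · rw [SetLike.mem_coe, g4]; exact monomial_mem_pair_pow hij 2 _ _ h4

lemma epair {i j : Fin 3} (hij : i ≠ j) :
    2 ≤ e1 i + e1 j ∧ 2 ≤ e2 i + e2 j ∧ 2 ≤ e3 i + e3 j ∧ 2 ≤ e4 i + e4 j := by
  have he1 := e1_apply; have he2 := e2_apply
  have he3 := e3_apply; have he4 := e4_apply
  simp only [Prod.mk.injEq] at he1 he2 he3 he4
  fin_cases i <;> fin_cases j <;> simp_all <;> omega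

lemma J_le_Vid {i j : Fin 3} (hij : i ≠ j) :
    (JId : Ideal (MvPolynomial (Fin 3) K)) ≤ Vid (pairw i j) 2 := by
  obtain ⟨h1, h2, h3, h4⟩ := epair hij
  exact le_trans (J_le_span2 hij h1 h2 h3 h4) (span_pair_pow_le_Vid i j 2)

/-- Part 3, ← : from an integral dependence equation of `f^2` over `JId^n`,
membership in each `span {X i, X j} ^ n`. -/
lemma pair_step {i j : Fin 3} (hij : i ≠ j) {n N : ℕ} (hN : 0 < N)
    {f : MvPolynomial (Fin 3) K} {c : ℕ → MvPolynomial (Fin 3) K}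
    (hc : ∀ k ∈ Finset.Icc 1 N, c k ∈ ((JId : Ideal (MvPolynomial (Fin 3) K)) ^ n) ^ k)
    (heq : (f ^ 2) ^ N + ∑ k ∈ Finset.Icc 1 N, c k * (f ^ 2) ^ (N - k) = 0) :
    f ∈ Ideal.span {X i, X j} ^ n := by
  have hcd : ∀ k ∈ Finset.Icc 1 N,
      Polynomial.X ^ (2 * n * k) ∣ Phi (pairw i j) (c k) := by
    intro k hk
    have h1 : c k ∈ (JId : Ideal (MvPolynomial (Fin 3) K)) ^ (n * k) := by
      rw [pow_mul]; exact hc k hk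
    have h2 := pow_le_Vid (J_le_Vid hij) (n * k) h1
    rw [mem_Vid] at h2
    have : 2 * (n * k) = 2 * n * k := by ring
    rwa [this] at h2
  have hint := int_lemma (pairw i j) (2 * n) (f ^ 2) N hN c hcd heq
  rw [map_pow] at hint
  have hdvd : Polynomial.X ^ n ∣ Phi (pairw i j) f := pow_dvd_of_sq hint
  rw [mem_span_pair_pow_iff hij]
  intro d hd
  have := (dvd_Phi_iff (pairw i j) n f).mp hdvd d hd
  rwa [wdeg_pairw hij] at this

/-- Part 3, → : support condition on `f^4`. -/
lemma support_cond_of_mem {i j : Fin 3} (hij : i ≠ j) {n : ℕ}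
    {f : MvPolynomial (Fin 3) K} (hf : f ∈ Ideal.span {X i, X j} ^ n) :
    ∀ d ∈ (f ^ 4).support, 4 * n ≤ d i + d j := by
  have hd : Polynomial.X ^ n ∣ Phi (pairw i j) f := span_pair_pow_le_Vid i j n hf
  have h4 : Polynomial.X ^ (4 * n) ∣ Phi (pairw i j) (f ^ 4) := by
    rw [map_pow]
    have := pow_dvd_pow_of_dvd hd 4
    rwa [← pow_mul, Nat.mul_comm n 4] at this
  intro d hdm
  have := (dvd_Phi_iff (pairw i j) (4 * n) (f ^ 4)).mp h4 d hdm
  rwa [wdeg_pairw hij] at this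

noncomputable def If1 : Fin 3 →₀ ℕ := Finsupp.single 0 1 + Finsupp.single 1 1
noncomputable def If2 : Fin 3 →₀ ℕ := Finsupp.single 1 1 + Finsupp.single 2 1
noncomputable def If3 : Fin 3 →₀ ℕ := Finsupp.single 2 1 + Finsupp.single 0 1

lemma If1_apply : (If1 0, If1 1, If1 2) = (1, 1, 0) := by simp [If1, Finsupp.single_apply]
lemma If2_apply : (If2 0, If2 1, If2 2) = (0, 1, 1) := by simp [If2, Finsupp.single_apply]
lemma If3_apply : (If3 0, If3 1, If3 2) = (1, 0, 1) := by simp [If3, Finsupp.single_apply]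

lemma gf1 : (X 0 : MvPolynomial (Fin 3) K) * X 1 = monomial If1 1 := by
  rw [Xmon, Xmon, monomial_mul, mul_one]; rfl
lemma gf2 : (X 1 : MvPolynomial (Fin 3) K) * X 2 = monomial If2 1 := by
  rw [Xmon, Xmon, monomial_mul, mul_one]; rfl
lemma gf3 : (X 2 : MvPolynomial (Fin 3) K) * X 0 = monomial If3 1 := by
  rw [Xmon, Xmon, monomial_mul, mul_one]; rfl

lemma monomial_mem_I (d : Fin 3 →₀ ℕ) (c : K)
    (h01 : 1 ≤ d 0 + d 1) (h02 : 1 ≤ d 0 + d 2) (h12 : 1 ≤ d 1 + d 2) :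
    monomial d c ∈ Ideal.span
      ({X 0 * X 1, X 1 * X 2, X 2 * X 0} : Set (MvPolynomial (Fin 3) K)) := by
  have hf1 := If1_apply; have hf2 := If2_apply; have hf3 := If3_apply
  simp only [Prod.mk.injEq] at hf1 hf2 hf3
  obtain ⟨a0, a1, a2⟩ := hf1
  obtain ⟨b0, b1, b2⟩ := hf2
  obtain ⟨c0, c1, c2⟩ := hf3
  have key : ∀ e : Fin 3 →₀ ℕ,
      monomial e 1 ∈ Ideal.span
        ({X 0 * X 1, X 1 * X 2, X 2 * X 0} : Set (MvPolynomial (Fin 3) K)) →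
      (∀ k, e k ≤ d k) →
      monomial d c ∈ Ideal.span
        ({X 0 * X 1, X 1 * X 2, X 2 * X 0} : Set (MvPolynomial (Fin 3) K)) := by
    intro e hmem hle
    rw [monomial_factor hle c]
    exact Ideal.mul_mem_left _ _ hmem
  have m1 : (monomial If1 1 : MvPolynomial (Fin 3) K) ∈ Ideal.span
      ({X 0 * X 1, X 1 * X 2, X 2 * X 0} : Set (MvPolynomial (Fin 3) K)) := by
    rw [← gf1]; exact Ideal.subset_span (Set.mem_insert _ _)
  have m2 : (monomial If2 1 : MvPolynomial (Fin 3) K) ∈ Ideal.span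
      ({X 0 * X 1, X 1 * X 2, X 2 * X 0} : Set (MvPolynomial (Fin 3) K)) := by
    rw [← gf2]
    exact Ideal.subset_span (Set.mem_insert_of_mem _ (Set.mem_insert _ _))
  have m3 : (monomial If3 1 : MvPolynomial (Fin 3) K) ∈ Ideal.span
      ({X 0 * X 1, X 1 * X 2, X 2 * X 0} : Set (MvPolynomial (Fin 3) K)) := by
    rw [← gf3]
    exact Ideal.subset_span
      (Set.mem_insert_of_mem _ (Set.mem_insert_of_mem _ rfl))
  by_cases h0 : d 0 = 0
  · exact key If2 m2 (le_of_three (by omega) (by omega) (by omega))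
  · by_cases h1 : d 1 = 0
    · exact key If3 m3 (le_of_three (by omega) (by omega) (by omega))
    · exact key If1 m1 (le_of_three (by omega) (by omega) (by omega))

end SymbAux

open SymbAux in
open MvPolynomial in
/-- In `K[x,y,z]`, for `I = (xy, yz, zx) = (x,y) ∩ (x,z) ∩ (y,z)`, the
ideal `J = (x²y², xyz, x²z², y²z²)` equals `I^{(2)}` and for every `n` the symbolic
power `I^{(n)} = (x,y)^n ∩ (x,z)^n ∩ (y,z)^n` is the rational power `(I^{(2)})^{n/2}`. -/
theorem example_symbolic_ratPow {K : Type*} [Field K] :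
    let R := MvPolynomial (Fin 3) K
    let x : R := X 0
    let y : R := X 1
    let z : R := X 2
    let symb : ℕ → Ideal R := fun n =>
      Ideal.span {x, y} ^ n ⊓ Ideal.span {x, z} ^ n ⊓ Ideal.span {y, z} ^ n
    let J : Ideal R := Ideal.span
      {x ^ 2 * y ^ 2, x * y * z, x ^ 2 * z ^ 2, y ^ 2 * z ^ 2}
    Ideal.span {x * y, y * z, z * x} =
        Ideal.span {x, y} ⊓ Ideal.span {x, z} ⊓ Ideal.span {y, z} ∧
      J = symb 2 ∧
      ∀ n : ℕ, (symb n : Set R) = ratPow J n 2 := by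
  intro R x y z symb J
  have h01 : (0 : Fin 3) ≠ 1 := by decide
  have h02 : (0 : Fin 3) ≠ 2 := by decide
  have h12 : (1 : Fin 3) ≠ 2 := by decide
  refine ⟨?_, ?_, ?_⟩
  · -- Part 1
    apply le_antisymm
    · rw [Ideal.span_le]
      rintro f (rfl | rfl | rfl)
      · refine SetLike.mem_coe.mpr (Submodule.mem_inf.mpr
          ⟨Submodule.mem_inf.mpr ⟨?_, ?_⟩, ?_⟩)
        · exact Ideal.mul_mem_right _ _ (Ideal.subset_span (Set.mem_insert _ _))
        · exact Ideal.mul_mem_right _ _ (Ideal.subset_span (Set.mem_insert _ _))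
        · exact Ideal.mul_mem_left _ _ (Ideal.subset_span (Set.mem_insert _ _))
      · refine SetLike.mem_coe.mpr (Submodule.mem_inf.mpr
          ⟨Submodule.mem_inf.mpr ⟨?_, ?_⟩, ?_⟩)
        · exact Ideal.mul_mem_right _ _
            (Ideal.subset_span (Set.mem_insert_of_mem _ rfl))
        · exact Ideal.mul_mem_left _ _
            (Ideal.subset_span (Set.mem_insert_of_mem _ rfl))
        · exact Ideal.mul_mem_right _ _ (Ideal.subset_span (Set.mem_insert _ _))
      · refine SetLike.mem_coe.mpr (Submodule.mem_inf.mpr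
          ⟨Submodule.mem_inf.mpr ⟨?_, ?_⟩, ?_⟩)
        · exact Ideal.mul_mem_left _ _ (Ideal.subset_span (Set.mem_insert _ _))
        · exact Ideal.mul_mem_right _ _
            (Ideal.subset_span (Set.mem_insert_of_mem _ rfl))
        · exact Ideal.mul_mem_right _ _
            (Ideal.subset_span (Set.mem_insert_of_mem _ rfl))
    · intro f hf
      rw [Submodule.mem_inf, Submodule.mem_inf] at hf
      obtain ⟨⟨ha, hb⟩, hc⟩ := hf
      have sa := (mem_span_pair_pow_iff h01 1 f).mp (by rw [pow_one]; exact ha)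
      have sb := (mem_span_pair_pow_iff h02 1 f).mp (by rw [pow_one]; exact hb)
      have sc := (mem_span_pair_pow_iff h12 1 f).mp (by rw [pow_one]; exact hc)
      exact mem_of_support_mem fun d hd =>
        monomial_mem_I d _ (sa d hd) (sb d hd) (sc d hd)
  · -- Part 2
    apply le_antisymm
    · obtain ⟨a1, a2, a3, a4⟩ := epair h01
      obtain ⟨b1, b2, b3, b4⟩ := epair h02
      obtain ⟨c1, c2, c3, c4⟩ := epair h12
      exact le_inf (le_inf (J_le_span2 h01 a1 a2 a3 a4)
        (J_le_span2 h02 b1 b2 b3 b4)) (J_le_span2 h12 c1 c2 c3 c4)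
    · intro f hf
      rw [Submodule.mem_inf, Submodule.mem_inf] at hf
      obtain ⟨⟨ha, hb⟩, hc⟩ := hf
      have sa := (mem_span_pair_pow_iff h01 2 f).mp ha
      have sb := (mem_span_pair_pow_iff h02 2 f).mp hb
      have sc := (mem_span_pair_pow_iff h12 2 f).mp hc
      have hmem : f ∈ (JId : Ideal (MvPolynomial (Fin 3) K)) ^ 1 :=
        mem_of_support_mem fun d hd =>
          monomial_mem_J_pow 1 d _ (by have := sa d hd; omega)
            (by have := sb d hd; omega) (by have := sc d hd; omega)
      rwa [pow_one] at hmem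
  · -- Part 3
    intro n
    ext f
    simp only [SetLike.mem_coe, ratPow, intCl, IsIntegralOverIdeal, Set.mem_setOf_eq]
    constructor
    · intro hf
      rw [Submodule.mem_inf, Submodule.mem_inf] at hf
      obtain ⟨⟨ha, hb⟩, hc⟩ := hf
      have sa := support_cond_of_mem h01 ha
      have sb := support_cond_of_mem h02 hb
      have sc := support_cond_of_mem h12 hc
      have hf4 : f ^ 4 ∈ (JId : Ideal (MvPolynomial (Fin 3) K)) ^ (n * 2) := by
        have : f ^ 4 ∈ (JId : Ideal (MvPolynomial (Fin 3) K)) ^ (2 * n) :=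
          mem_of_support_mem fun d hd =>
            monomial_mem_J_pow (2 * n) d _ (by have := sa d hd; omega)
              (by have := sb d hd; omega) (by have := sc d hd; omega)
        rwa [Nat.mul_comm 2 n] at this
      refine ⟨2, by norm_num, fun i => if i = 2 then -(f ^ 4) else 0, ?_, ?_⟩
      · intro i hi
        rw [Finset.mem_Icc] at hi
        rcases (by omega : i = 1 ∨ i = 2) with rfl | rfl
        · simp
        · simp only [if_pos rfl]
          refine neg_mem ?_
          rw [← pow_mul]
          exact hf4
      · have hicc : Finset.Icc 1 2 = ({1, 2} : Finset ℕ) := rfl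
        rw [hicc, Finset.sum_insert (by decide), Finset.sum_singleton]
        norm_num
        ring
    · rintro ⟨N, hN, c, hc, heq⟩
      refine Submodule.mem_inf.mpr ⟨Submodule.mem_inf.mpr ⟨?_, ?_⟩, ?_⟩
      · exact pair_step h01 hN hc heq
      · exact pair_step h02 hN hc heq
      · exact pair_step h12 hN hc heq
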